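/- Let X, Y be Tychonoff spaces and f : X → Y continuous, with Stone–Čech extension βf : βX → βY. If μ ∈ O(βX) is τ-smooth with respect to X, then O(βf)(μ) = (φ ↦ μ(φ ∘ βf)) is τ-smooth with respect to Y; hence O_τ(f) := O(βf)|_{O_τ(X)} maps O_τ(X) into O_τ(Y), and this map is continuous. -/

import Mathlib

open Filter Topology

/-- If `f : X → Y` is continuous with Stone–Čech extension `βf : βX → βY`, then
`O(βf)` maps τ-smooth functionals in `O(βX)` (w.r.t. `X`) to τ-smooth functionals in
`O(βY)` (w.r.t. `Y`), so `O_τ(f)` maps `O_τ(X)` into `O_τ(Y)`; moreover this map is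
continuous for the pointwise convergence topologies. -/
theorem stmt16 {X Y : Type*} [TopologicalSpace X] [T35Space X]
    [TopologicalSpace Y] [T35Space Y]
    (f : X → Y) (hf : Continuous f) :
    (∀ μ : C(StoneCech X, ℝ) → ℝ,
      ((∀ φ ψ : C(StoneCech X, ℝ), φ ≤ ψ → μ φ ≤ μ ψ) ∧
       (∀ (φ : C(StoneCech X, ℝ)) (c : ℝ),
         μ (φ + ContinuousMap.const (StoneCech X) c) = μ φ + c * μ 1) ∧
       μ 1 = 1 ∧
       (∀ (ι : Type) [SemilatticeSup ι] [Nonempty ι] (φ : ι → C(StoneCech X, ℝ)),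
         Antitone φ → (∀ x : X, Tendsto (fun a => φ a (stoneCechUnit x)) atTop (𝓝 0)) →
         Tendsto (fun a => μ (φ a)) atTop (𝓝 0) ∧
           Tendsto (fun a => μ (-(φ a))) atTop (𝓝 0))) →
      (letI ν : C(StoneCech Y, ℝ) → ℝ := fun φ =>
        μ (φ.comp ⟨stoneCechExtend (continuous_stoneCechUnit.comp hf),
          continuous_stoneCechExtend _⟩)
       (∀ φ ψ : C(StoneCech Y, ℝ), φ ≤ ψ → ν φ ≤ ν ψ) ∧
       (∀ (φ : C(StoneCech Y, ℝ)) (c : ℝ),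
         ν (φ + ContinuousMap.const (StoneCech Y) c) = ν φ + c * ν 1) ∧
       ν 1 = 1 ∧
       (∀ (ι : Type) [SemilatticeSup ι] [Nonempty ι] (φ : ι → C(StoneCech Y, ℝ)),
         Antitone φ → (∀ y : Y, Tendsto (fun a => φ a (stoneCechUnit y)) atTop (𝓝 0)) →
         Tendsto (fun a => ν (φ a)) atTop (𝓝 0) ∧
           Tendsto (fun a => ν (-(φ a))) atTop (𝓝 0)))) ∧
    Continuous (fun μ : {μ : C(StoneCech X, ℝ) → ℝ //
        (∀ φ ψ : C(StoneCech X, ℝ), φ ≤ ψ → μ φ ≤ μ ψ) ∧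
        (∀ (φ : C(StoneCech X, ℝ)) (c : ℝ),
          μ (φ + ContinuousMap.const (StoneCech X) c) = μ φ + c * μ 1) ∧
        μ 1 = 1 ∧
        (∀ (ι : Type) [SemilatticeSup ι] [Nonempty ι] (φ : ι → C(StoneCech X, ℝ)),
          Antitone φ → (∀ x : X, Tendsto (fun a => φ a (stoneCechUnit x)) atTop (𝓝 0)) →
          Tendsto (fun a => μ (φ a)) atTop (𝓝 0) ∧
            Tendsto (fun a => μ (-(φ a))) atTop (𝓝 0))} =>
      (fun φ : C(StoneCech Y, ℝ) =>
        μ.1 (φ.comp ⟨stoneCechExtend (continuous_stoneCechUnit.comp hf),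
          continuous_stoneCechExtend _⟩))) := by
  constructor
  · intro μ ⟨hmono, hadd, hnorm, htau⟩
    set g : C(StoneCech X, StoneCech Y) :=
      ⟨stoneCechExtend (continuous_stoneCechUnit.comp hf), continuous_stoneCechExtend _⟩ with hg
    refine ⟨?_, ?_, ?_, ?_⟩
    · intro φ ψ h
      exact hmono _ _ (fun x => h (g x))
    · intro φ c
      have h1 : ((φ + ContinuousMap.const (StoneCech Y) c).comp g)
          = φ.comp g + ContinuousMap.const (StoneCech X) c := by ext x; rfl
      have h2 : (ContinuousMap.comp (1 : C(StoneCech Y, ℝ)) g) = 1 := by ext x; rfl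
      simp only [h1, h2, hadd]
    · have h2 : (ContinuousMap.comp (1 : C(StoneCech Y, ℝ)) g) = 1 := by ext x; rfl
      simp only [h2, hnorm]
    · intro ι _ _ φ hanti hpt
      have key := htau ι (fun a => (φ a).comp g) (fun a b hab x => hanti hab (g x)) ?_
      · refine ⟨key.1, ?_⟩
        have : ∀ a, (-(φ a)).comp g = -((φ a).comp g) := fun a => by ext x; rfl
        simpa only [this] using key.2
      · intro x
        have : g (stoneCechUnit x) = stoneCechUnit (f x) := by
          exact congrFun (stoneCechExtend_extends (continuous_stoneCechUnit.comp hf)) x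
        simpa [this] using hpt (f x)
  · apply continuous_pi
    intro φ
    exact (continuous_apply _).comp continuous_subtype_val
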